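/- For every real m×n matrix A and every integer c ≥ 2, herwdisc(A, 2) ≤ c · herdisc(A, c). -/

import Mathlib

open Finset

/-- `c`-color discrepancy of a matrix: minimum over `c`-colorings `p` of the columns of the
maximum over colors `d` and rows `i` of `|∑_{j : p j = d} A i j - (1/c) ∑_j A i j|`. -/
noncomputable def mdisc {ι κ : Type*} [Fintype ι] [Fintype κ] (A : ι → κ → ℝ) (c : ℕ) : ℝ :=
  ⨅ p : κ → Fin c, ⨆ d : Fin c, ⨆ i : ι,
    |∑ j ∈ Finset.univ.filter (fun j => p j = d), A i j - (1 / (c : ℝ)) * ∑ j, A i j|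

/-- hereditary `c`-color discrepancy: maximum of `mdisc` over all nonempty column submatrices. -/
noncomputable def mherdisc {ι : Type*} [Fintype ι] {n : ℕ} (A : ι → Fin n → ℝ) (c : ℕ) : ℝ :=
  ⨆ J : {J : Finset (Fin n) // J.Nonempty}, mdisc (fun i (j : {x // x ∈ J.1}) => A i j.1) c

/-- `d_A(p,q) = max_i |∑_j a_{ij} (p j - q j)|` for floating colorings `p, q`. -/
noncomputable def dA {ι κ : Type*} [Fintype ι] [Fintype κ] (A : ι → κ → ℝ) (p q : κ → ℝ) : ℝ :=
  ⨆ i : ι, |∑ j, A i j * (p j - q j)|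

/-- weighted discrepancy with weight `z`: min over `{0,1}`-colorings `q` of `d_A(z·1, q)`. -/
noncomputable def wdisc {ι κ : Type*} [Fintype ι] [Fintype κ] (A : ι → κ → ℝ) (z : ℝ) : ℝ :=
  ⨅ q : κ → Bool, dA A (fun _ => z) (fun j => if q j then 1 else 0)

/-- `wdisc(A,2) = sup_{z ∈ [0,1]} wdisc(A,z)`. -/
noncomputable def wdisc2 {ι κ : Type*} [Fintype ι] [Fintype κ] (A : ι → κ → ℝ) : ℝ :=
  ⨆ z : Set.Icc (0:ℝ) 1, wdisc A z

/-- hereditary weighted discrepancy in two colors. -/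
noncomputable def mherwdisc2 {ι : Type*} [Fintype ι] {n : ℕ} (A : ι → Fin n → ℝ) : ℝ :=
  ⨆ J : {J : Finset (Fin n) // J.Nonempty}, wdisc2 (fun i (j : {x // x ∈ J.1}) => A i j.1)

section Aux

variable {m n : ℕ}

private lemma rowT_nonneg (A : Fin m → Fin n → ℝ) : 0 ≤ ∑ i, ∑ j, |A i j| :=
  Finset.sum_nonneg fun _ _ => Finset.sum_nonneg fun _ _ => abs_nonneg _

private lemma row_abs (A : Fin m → Fin n → ℝ) (i : Fin m) (s : Finset (Fin n)) :
    |∑ j ∈ s, A i j| ≤ ∑ i', ∑ j, |A i' j| := by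
  calc |∑ j ∈ s, A i j| ≤ ∑ j ∈ s, |A i j| := Finset.abs_sum_le_sum_abs _ _
    _ ≤ ∑ j, |A i j| := Finset.sum_le_sum_of_subset_of_nonneg (Finset.subset_univ s)
        (fun _ _ _ => abs_nonneg _)
    _ ≤ ∑ i', ∑ j, |A i' j| := Finset.single_le_sum (f := fun i' => ∑ j, |A i' j|)
        (fun _ _ => Finset.sum_nonneg fun _ _ => abs_nonneg _) (Finset.mem_univ i)

private lemma row_abs' (A : Fin m → Fin n → ℝ) (i : Fin m) {J : Finset (Fin n)}
    (s : Finset {x // x ∈ J}) :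
    |∑ j ∈ s, A i j.1| ≤ ∑ i', ∑ j, |A i' j| := by
  calc |∑ j ∈ s, A i j.1| ≤ ∑ j ∈ s, |A i j.1| := Finset.abs_sum_le_sum_abs _ _
    _ ≤ ∑ j : {x // x ∈ J}, |A i j.1| := Finset.sum_le_sum_of_subset_of_nonneg
        (Finset.subset_univ s) (fun _ _ _ => abs_nonneg _)
    _ = ∑ j ∈ J, |A i j| := Finset.sum_coe_sort J (fun j => |A i j|)
    _ ≤ ∑ j, |A i j| := Finset.sum_le_sum_of_subset_of_nonneg (Finset.subset_univ J)
        (fun _ _ _ => abs_nonneg _)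
    _ ≤ ∑ i', ∑ j, |A i' j| := Finset.single_le_sum (f := fun i' => ∑ j, |A i' j|)
        (fun _ _ => Finset.sum_nonneg fun _ _ => abs_nonneg _) (Finset.mem_univ i)

private lemma mdisc_nonneg {ι κ : Type*} [Fintype ι] [Fintype κ] (A : ι → κ → ℝ) (c : ℕ) :
    0 ≤ mdisc A c :=
  Real.iInf_nonneg fun _ => Real.iSup_nonneg fun _ => Real.iSup_nonneg fun _ => abs_nonneg _

private lemma mherdisc_nonneg (A : Fin m → Fin n → ℝ) (c : ℕ) : 0 ≤ mherdisc A c :=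
  Real.iSup_nonneg fun _ => mdisc_nonneg _ _

private lemma sup_form_le (A : Fin m → Fin n → ℝ) {c : ℕ} (hc : 2 ≤ c) (J : Finset (Fin n))
    (p : {x // x ∈ J} → Fin c) :
    (⨆ d : Fin c, ⨆ i : Fin m,
      |∑ j ∈ Finset.univ.filter (fun j => p j = d), A i j.1
        - (1 / (c : ℝ)) * ∑ j : {x // x ∈ J}, A i j.1|)
      ≤ 2 * ∑ i', ∑ j, |A i' j| := by
  have hT := rowT_nonneg A
  refine Real.iSup_le (fun d => Real.iSup_le (fun i => ?_) (by linarith)) (by linarith)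
  have h1 := row_abs' A i (Finset.univ.filter (fun j => p j = d))
  have h2 := row_abs' A i (Finset.univ : Finset {x // x ∈ J})
  have hc1 : (1:ℝ) ≤ (c:ℝ) := by exact_mod_cast (by omega : 1 ≤ c)
  have habs : |(1 / (c:ℝ)) * ∑ j : {x // x ∈ J}, A i j.1|
      ≤ |∑ j : {x // x ∈ J}, A i j.1| := by
    rw [abs_mul]
    have h3 : |(1 / (c:ℝ))| ≤ 1 := by
      rw [abs_of_nonneg (by positivity)]
      rw [div_le_one (by linarith)]
      linarith
    exact mul_le_of_le_one_left (abs_nonneg _) h3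
  have hstep := abs_sub (∑ j ∈ Finset.univ.filter (fun j => p j = d), A i j.1)
    ((1 / (c : ℝ)) * ∑ j : {x // x ∈ J}, A i j.1)
  linarith

private lemma mdisc_le (A : Fin m → Fin n → ℝ) {c : ℕ} (hc : 2 ≤ c) (J : Finset (Fin n)) :
    mdisc (fun i (j : {x // x ∈ J}) => A i j.1) c ≤ 2 * ∑ i', ∑ j, |A i' j| := by
  haveI : Nonempty (Fin c) := ⟨⟨0, by omega⟩⟩
  refine ciInf_le_of_le ⟨0, ?_⟩ (fun _ => ⟨0, by omega⟩) (sup_form_le A hc J _)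
  rintro y ⟨p, rfl⟩
  exact Real.iSup_nonneg fun _ => Real.iSup_nonneg fun _ => abs_nonneg _

private lemma bdd_mherdisc (A : Fin m → Fin n → ℝ) {c : ℕ} (hc : 2 ≤ c) :
    BddAbove (Set.range (fun J : {J : Finset (Fin n) // J.Nonempty} =>
      mdisc (fun i (j : {x // x ∈ J.1}) => A i j.1) c)) :=
  ⟨2 * ∑ i', ∑ j, |A i' j|, by rintro y ⟨J, rfl⟩; exact mdisc_le A hc J.1⟩

private lemma exists_coloring (A : Fin m → Fin n → ℝ) {c : ℕ} (hc : 2 ≤ c) (D : Finset (Fin n)) :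
    ∃ p : Fin n → Fin c, ∀ (i : Fin m) (d : Fin c),
      |∑ j ∈ D.filter (fun j => p j = d), A i j - (1 / (c : ℝ)) * ∑ j ∈ D, A i j|
        ≤ mherdisc A c := by
  haveI : Nonempty (Fin c) := ⟨⟨0, by omega⟩⟩
  rcases D.eq_empty_or_nonempty with rfl | hD
  · exact ⟨fun _ => ⟨0, by omega⟩, fun i d => by simpa using mherdisc_nonneg A c⟩
  obtain ⟨p', hp'⟩ := exists_eq_ciInf_of_finite (f := fun p : {x // x ∈ D} → Fin c =>
    ⨆ d : Fin c, ⨆ i : Fin m,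
      |∑ j ∈ Finset.univ.filter (fun j => p j = d), A i j.1
        - (1 / (c : ℝ)) * ∑ j : {x // x ∈ D}, A i j.1|)
  have hle : (⨆ d : Fin c, ⨆ i : Fin m,
      |∑ j ∈ Finset.univ.filter (fun j => p' j = d), A i j.1
        - (1 / (c : ℝ)) * ∑ j : {x // x ∈ D}, A i j.1|)
      ≤ mherdisc A c := by
    rw [hp']
    exact le_ciSup (bdd_mherdisc A hc) ⟨D, hD⟩
  have hdi : ∀ (d : Fin c) (i : Fin m),
      |∑ j ∈ Finset.univ.filter (fun j => p' j = d), A i j.1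
        - (1/(c:ℝ)) * ∑ j : {x // x ∈ D}, A i j.1|
        ≤ mherdisc A c := by
    intro d i
    refine le_trans ?_ hle
    have b2 : (⨆ i : Fin m, |∑ j ∈ Finset.univ.filter (fun j => p' j = d), A i j.1
        - (1/(c:ℝ)) * ∑ j : {x // x ∈ D}, A i j.1|)
        ≤ ⨆ d : Fin c, ⨆ i : Fin m, |∑ j ∈ Finset.univ.filter (fun j => p' j = d), A i j.1
          - (1/(c:ℝ)) * ∑ j : {x // x ∈ D}, A i j.1| :=
      le_ciSup (f := fun d : Fin c => ⨆ i : Fin m,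
        |∑ j ∈ Finset.univ.filter (fun j => p' j = d), A i j.1
          - (1/(c:ℝ)) * ∑ j : {x // x ∈ D}, A i j.1|)
        (Set.Finite.bddAbove (Set.finite_range _)) d
    refine le_trans ?_ b2
    exact le_ciSup (f := fun i : Fin m => |∑ j ∈ Finset.univ.filter (fun j => p' j = d), A i j.1
        - (1/(c:ℝ)) * ∑ j : {x // x ∈ D}, A i j.1|)
      (Set.Finite.bddAbove (Set.finite_range _)) i
  refine ⟨fun j => if h : j ∈ D then p' ⟨j, h⟩ else ⟨0, by omega⟩, fun i d => ?_⟩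
  have e1 : ∑ j ∈ D.filter (fun j => (if h : j ∈ D then p' ⟨j,h⟩ else ⟨0, by omega⟩) = d), A i j
      = ∑ j ∈ Finset.univ.filter (fun j => p' j = d), A i j.1 := by
    rw [Finset.sum_filter, Finset.sum_filter, ← Finset.sum_coe_sort D
      (fun j => if (if h : j ∈ D then p' ⟨j,h⟩ else ⟨0, by omega⟩) = d then A i j else 0)]
    refine Finset.sum_congr rfl fun j _ => ?_
    rcases j with ⟨j, hj⟩
    rw [dif_pos hj]
  have e2 : ∑ j ∈ D, A i j = ∑ j : {x // x ∈ D}, A i j.1 := (Finset.sum_coe_sort D (A i)).symm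
  rw [e1, e2]
  exact hdi d i

private lemma round_split (A : Fin m → Fin n → ℝ) {c : ℕ} (hc : 2 ≤ c) (i : Fin m)
    (D : Finset (Fin n)) (p : Fin n → Fin c) (S : Finset (Fin c)) :
    ∑ j ∈ D, A i j * ((S.card : ℝ) / c - (if p j ∈ S then (1:ℝ) else 0))
      = ∑ d ∈ S, ((1 / (c : ℝ)) * ∑ j ∈ D, A i j
          - ∑ j ∈ D.filter (fun j => p j = d), A i j) := by
  have hind : ∑ j ∈ D, (if p j ∈ S then A i j else 0)
      = ∑ d ∈ S, ∑ j ∈ D.filter (fun j => p j = d), A i j := by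
    calc ∑ j ∈ D, (if p j ∈ S then A i j else 0)
        = ∑ j ∈ D, ∑ d ∈ S, (if p j = d then A i j else 0) :=
          Finset.sum_congr rfl fun j _ => (Finset.sum_ite_eq S (p j) fun _ => A i j).symm
      _ = ∑ d ∈ S, ∑ j ∈ D, (if p j = d then A i j else 0) := Finset.sum_comm
      _ = ∑ d ∈ S, ∑ j ∈ D.filter (fun j => p j = d), A i j :=
          Finset.sum_congr rfl fun d _ => (Finset.sum_filter _ _).symm
  calc ∑ j ∈ D, A i j * ((S.card : ℝ) / c - (if p j ∈ S then (1:ℝ) else 0))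
      = (∑ j ∈ D, A i j) * ((S.card : ℝ)/c) - ∑ j ∈ D, (if p j ∈ S then A i j else 0) := by
        have hterm : ∀ j ∈ D, A i j * ((S.card : ℝ) / c - (if p j ∈ S then (1:ℝ) else 0))
            = A i j * ((S.card : ℝ)/c) - (if p j ∈ S then A i j else 0) := by
          intro j _; split_ifs <;> ring
        rw [Finset.sum_congr rfl hterm, Finset.sum_sub_distrib, Finset.sum_mul]
    _ = ∑ d ∈ S, ((1/(c:ℝ)) * ∑ j ∈ D, A i j - ∑ j ∈ D.filter (fun j => p j = d), A i j) := by
        rw [Finset.sum_sub_distrib, hind, Finset.sum_const, nsmul_eq_mul]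
        ring

private lemma round_err₁ (A : Fin m → Fin n → ℝ) {c : ℕ} (hc : 2 ≤ c) (i : Fin m)
    (D : Finset (Fin n)) (p : Fin n → Fin c) (S : Finset (Fin c)) {H : ℝ}
    (hp : ∀ d : Fin c,
      |∑ j ∈ D.filter (fun j => p j = d), A i j - (1/(c:ℝ)) * ∑ j ∈ D, A i j| ≤ H) :
    |∑ j ∈ D, A i j * ((S.card : ℝ)/c - (if p j ∈ S then (1:ℝ) else 0))|
      ≤ (S.card : ℝ) * H := by
  rw [round_split A hc i D p S]
  calc |∑ d ∈ S, ((1/(c:ℝ)) * ∑ j ∈ D, A i j - ∑ j ∈ D.filter (fun j => p j = d), A i j)|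
      ≤ ∑ d ∈ S, |(1/(c:ℝ)) * ∑ j ∈ D, A i j - ∑ j ∈ D.filter (fun j => p j = d), A i j| :=
        Finset.abs_sum_le_sum_abs _ _
    _ ≤ S.card • H := Finset.sum_le_card_nsmul _ _ _
        (fun d _ => by rw [abs_sub_comm]; exact hp d)
    _ = (S.card : ℝ) * H := nsmul_eq_mul _ _

private lemma round_err₂ (A : Fin m → Fin n → ℝ) {c : ℕ} (hc : 2 ≤ c) (i : Fin m)
    (D : Finset (Fin n)) (p : Fin n → Fin c) (S : Finset (Fin c)) {H : ℝ}
    (hp : ∀ d : Fin c,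
      |∑ j ∈ D.filter (fun j => p j = d), A i j - (1/(c:ℝ)) * ∑ j ∈ D, A i j| ≤ H) :
    |∑ j ∈ D, A i j * ((S.card : ℝ)/c - (if p j ∈ S then (1:ℝ) else 0))|
      ≤ ((c - S.card : ℕ) : ℝ) * H := by
  have hcne : (c:ℝ) ≠ 0 := by positivity
  rw [round_split A hc i D p S]
  have htot : ∑ d : Fin c, ((1/(c:ℝ)) * ∑ j ∈ D, A i j
      - ∑ j ∈ D.filter (fun j => p j = d), A i j) = 0 := by
    rw [Finset.sum_sub_distrib, Finset.sum_fiberwise D p (A i), Finset.sum_const,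
      nsmul_eq_mul, Finset.card_univ, Fintype.card_fin]
    field_simp
    ring
  have hcompl : ∑ d ∈ S, ((1/(c:ℝ)) * ∑ j ∈ D, A i j
        - ∑ j ∈ D.filter (fun j => p j = d), A i j)
      = -∑ d ∈ Sᶜ, ((1/(c:ℝ)) * ∑ j ∈ D, A i j
        - ∑ j ∈ D.filter (fun j => p j = d), A i j) := by
    have h := Finset.sum_compl_add_sum S (fun d => (1/(c:ℝ)) * ∑ j ∈ D, A i j
      - ∑ j ∈ D.filter (fun j => p j = d), A i j)
    rw [htot] at h
    linarith
  rw [hcompl, abs_neg]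
  calc |∑ d ∈ Sᶜ, ((1/(c:ℝ)) * ∑ j ∈ D, A i j - ∑ j ∈ D.filter (fun j => p j = d), A i j)|
      ≤ ∑ d ∈ Sᶜ, |(1/(c:ℝ)) * ∑ j ∈ D, A i j - ∑ j ∈ D.filter (fun j => p j = d), A i j| :=
        Finset.abs_sum_le_sum_abs _ _
    _ ≤ Sᶜ.card • H := Finset.sum_le_card_nsmul _ _ _
        (fun d _ => by rw [abs_sub_comm]; exact hp d)
    _ = ((c - S.card : ℕ) : ℝ) * H := by
        rw [nsmul_eq_mul, Finset.card_compl, Fintype.card_fin]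


private lemma key (A : Fin m → Fin n → ℝ) {c : ℕ} (hc : 2 ≤ c) :
    ∀ (K a : ℕ), a + 1 ≤ c ^ K → ∀ (J : Finset (Fin n)) (x : Fin n → ℝ),
      (∀ j ∈ J, x j = (a : ℝ) / (c:ℝ) ^ K ∨ x j = ((a : ℝ) + 1) / (c:ℝ) ^ K) →
      ∃ q : Fin n → Bool, ∀ i : Fin m,
        |∑ j ∈ J, A i j * (x j - (if q j then (1:ℝ) else 0))|
          ≤ (c : ℝ) * mherdisc A c * (1 - (1 / (c:ℝ)) ^ K) := by
  intro K
  induction K with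
  | zero =>
    intro a ha J x hx
    classical
    have ha0 : a = 0 := by simp only [pow_zero] at ha; omega
    subst ha0
    refine ⟨fun j => if x j = 1 then true else false, fun i => ?_⟩
    have hz : ∀ j ∈ J, A i j * (x j - (if (if x j = 1 then true else false) then (1:ℝ) else 0)) = 0 := by
      intro j hj
      rcases hx j hj with h | h <;> norm_num at h <;> simp [h]
    rw [Finset.sum_eq_zero hz]
    norm_num
  | succ K ih =>
    intro a ha J x hx
    classical
    have hH0 : 0 ≤ mherdisc A c := mherdisc_nonneg A c
    have hc0 : (0:ℝ) < c := by positivity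
    have hcne : (c:ℝ) ≠ 0 := ne_of_gt hc0
    have hcK : (0:ℝ) < (c:ℝ)^K := pow_pos hc0 K
    have hcKne : ((c:ℝ)^K) ≠ 0 := ne_of_gt hcK
    set r := a % c with hr
    set b := a / c with hb
    have hab : a = c * b + r := (Nat.div_add_mod a c).symm
    have hrc : r < c := Nat.mod_lt _ (by omega)
    have hbK : b + 1 ≤ c ^ K := by
      have h1 : a < c ^ K * c := by rw [← pow_succ]; omega
      have h2 : a / c < c ^ K := (Nat.div_lt_iff_lt_mul (by omega : 0 < c)).mpr h1
      omega
    have haR : (a:ℝ) = (c:ℝ) * (b:ℝ) + (r:ℝ) := by rw [hab]; push_cast; ring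
    set v0 : ℝ := (a : ℝ) / (c:ℝ) ^ (K+1) with hv0
    set w0 : ℝ := (b : ℝ) / (c:ℝ) ^ K with hw0
    set w1 : ℝ := ((b : ℝ)+1) / (c:ℝ) ^ K with hw1
    set D0 := J.filter (fun j => x j = v0) with hD0
    set D1 := J.filter (fun j => ¬ (x j = v0)) with hD1
    obtain ⟨p0, hp0⟩ := exists_coloring A hc D0
    obtain ⟨p1, hp1⟩ := exists_coloring A hc D1
    obtain ⟨S0, -, hS0⟩ := Finset.exists_subset_card_eq (s := (Finset.univ : Finset (Fin c))) (n := r)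
      (by simp only [Finset.card_univ, Fintype.card_fin]; omega)
    obtain ⟨S1, -, hS1⟩ := Finset.exists_subset_card_eq (s := (Finset.univ : Finset (Fin c))) (n := r+1)
      (by simp only [Finset.card_univ, Fintype.card_fin]; omega)
    set x' : Fin n → ℝ := fun j =>
      if j ∈ D0 then (if p0 j ∈ S0 then w1 else w0)
      else if j ∈ D1 then (if p1 j ∈ S1 then w1 else w0) else w0 with hx'
    have hx'mem : ∀ j, x' j = w0 ∨ x' j = w1 := by
      intro j; simp only [hx']; split_ifs <;> simp
    obtain ⟨q, hq⟩ := ih b hbK J x' (fun j _ => by rw [← hw0, ← hw1]; exact hx'mem j)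
    refine ⟨q, fun i => ?_⟩
    -- decomposition
    have hdecomp : ∑ j ∈ J, A i j * (x j - (if q j then (1:ℝ) else 0))
        = (∑ j ∈ D0, A i j * (x j - x' j)) + (∑ j ∈ D1, A i j * (x j - x' j))
          + ∑ j ∈ J, A i j * (x' j - (if q j then (1:ℝ) else 0)) := by
      have h1 : (∑ j ∈ D0, A i j * (x j - x' j)) + (∑ j ∈ D1, A i j * (x j - x' j))
          = ∑ j ∈ J, A i j * (x j - x' j) := by
        rw [hD0, hD1]
        exact Finset.sum_filter_add_sum_filter_not J _ _
      rw [h1, ← Finset.sum_add_distrib]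
      exact Finset.sum_congr rfl fun j _ => by ring
    -- error on D0
    have he0 : |∑ j ∈ D0, A i j * (x j - x' j)|
        ≤ (1/(c:ℝ)^K) * ((S0.card:ℝ) * mherdisc A c) := by
      have hterm : ∀ j ∈ D0, A i j * (x j - x' j)
          = (1/(c:ℝ)^K) * (A i j * ((S0.card : ℝ)/c - (if p0 j ∈ S0 then (1:ℝ) else 0))) := by
        intro j hj
        have hj' := hj
        rw [hD0] at hj'
        have hxj : x j = v0 := (Finset.mem_filter.mp hj').2
        have hx'j : x' j = if p0 j ∈ S0 then w1 else w0 := by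
          simp only [hx', if_pos hj]
        rw [hxj, hx'j, hS0, hv0, hw0, hw1, haR]
        split_ifs <;> (field_simp; ring)
      rw [Finset.sum_congr rfl hterm, ← Finset.mul_sum, abs_mul, abs_of_nonneg (by positivity)]
      exact mul_le_mul_of_nonneg_left (round_err₁ A hc i D0 p0 S0 (hp0 i)) (by positivity)
    -- error on D1
    have he1 : |∑ j ∈ D1, A i j * (x j - x' j)|
        ≤ (1/(c:ℝ)^K) * (((c - S1.card : ℕ) : ℝ) * mherdisc A c) := by
      have hterm : ∀ j ∈ D1, A i j * (x j - x' j)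
          = (1/(c:ℝ)^K) * (A i j * ((S1.card : ℝ)/c - (if p1 j ∈ S1 then (1:ℝ) else 0))) := by
        intro j hj
        have hj' := hj
        rw [hD1] at hj'
        have hjmem := Finset.mem_filter.mp hj'
        have hxj : x j = ((a:ℝ)+1) / (c:ℝ)^(K+1) := by
          rcases hx j hjmem.1 with h | h
          · exact absurd (by rw [h, hv0]) hjmem.2
          · exact h
        have hj0 : j ∉ D0 := by
          rw [hD0]
          simp only [Finset.mem_filter, not_and]
          exact fun _ => hjmem.2
        have hx'j : x' j = if p1 j ∈ S1 then w1 else w0 := by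
          simp only [hx', if_neg hj0, if_pos hj]
        rw [hxj, hx'j, hS1, hw0, hw1, haR]
        push_cast
        split_ifs <;> (field_simp; ring)
      rw [Finset.sum_congr rfl hterm, ← Finset.mul_sum, abs_mul, abs_of_nonneg (by positivity)]
      exact mul_le_mul_of_nonneg_left (round_err₂ A hc i D1 p1 S1 (hp1 i)) (by positivity)
    have hcast : ((c - (r+1) : ℕ) : ℝ) = (c:ℝ) - (r:ℝ) - 1 := by
      have h1 : r + 1 ≤ c := hrc
      push_cast [Nat.cast_sub h1]
      ring
    have habs3 := abs_add_three (∑ j ∈ D0, A i j * (x j - x' j))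
      (∑ j ∈ D1, A i j * (x j - x' j))
      (∑ j ∈ J, A i j * (x' j - (if q j then (1:ℝ) else 0)))
    have hqi := hq i
    rw [hdecomp]
    refine le_trans habs3 ?_
    rw [hS0] at he0
    rw [hS1, hcast] at he1
    have hfin : (1/(c:ℝ)^K) * ((r:ℝ) * mherdisc A c)
        + (1/(c:ℝ)^K) * (((c:ℝ) - (r:ℝ) - 1) * mherdisc A c)
        + (c : ℝ) * mherdisc A c * (1 - (1 / (c:ℝ)) ^ K)
        = (c : ℝ) * mherdisc A c * (1 - (1 / (c:ℝ)) ^ (K+1)) := by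
      rw [one_div_pow, one_div_pow]
      field_simp
      ring
    linarith

end Aux


/-- For every real m×n matrix A and every integer c ≥ 2, herwdisc(A, 2) ≤ c · herdisc(A, c). -/
theorem herwdisc_le_c_mul_herdisc {m n : ℕ} (hm : 0 < m) (hn : 0 < n)
    (A : Fin m → Fin n → ℝ) (c : ℕ) (hc : 2 ≤ c) :
    mherwdisc2 A ≤ (c : ℝ) * mherdisc A c := by
  classical
  have hc0 : (0:ℝ) < c := by exact_mod_cast (by omega : 0 < c)
  have hH0 : 0 ≤ mherdisc A c := mherdisc_nonneg A c
  have hcH : 0 ≤ (c:ℝ) * mherdisc A c := mul_nonneg (le_of_lt hc0) hH0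
  haveI : Nonempty {J : Finset (Fin n) // J.Nonempty} :=
    ⟨⟨{⟨0, hn⟩}, Finset.singleton_nonempty _⟩⟩
  unfold mherwdisc2
  refine ciSup_le fun J => ?_
  unfold wdisc2
  haveI : Nonempty (Set.Icc (0:ℝ) 1) := ⟨⟨0, Set.mem_Icc.mpr ⟨le_refl 0, zero_le_one⟩⟩⟩
  refine ciSup_le fun z => ?_
  obtain ⟨hz0, hz1⟩ := z.2
  refine le_of_forall_pos_le_add fun ε hε => ?_
  have hT0 : 0 ≤ ∑ i', ∑ j, |A i' j| := rowT_nonneg A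
  set T := ∑ i', ∑ j, |A i' j| with hTdef
  have h1c : 1/(c:ℝ) < 1 := by
    rw [div_lt_one hc0]
    exact_mod_cast (by omega : 1 < c)
  obtain ⟨K, hK⟩ := exists_pow_lt_of_lt_one (x := ε/(T+1)) (by positivity) h1c
  have hcK : (0:ℝ) < (c:ℝ)^K := pow_pos hc0 K
  have hcKn : 1 ≤ c^K := Nat.one_le_pow _ _ (by omega)
  set a : ℕ := min (⌊z.1 * (c:ℝ)^K⌋.toNat) (c^K - 1) with hadef
  have haK : a + 1 ≤ c^K := by
    have := min_le_right (⌊z.1 * (c:ℝ)^K⌋.toNat) (c^K - 1)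
    omega
  have hfl0 : (0:ℤ) ≤ ⌊z.1 * (c:ℝ)^K⌋ :=
    Int.floor_nonneg.mpr (mul_nonneg hz0 (le_of_lt hcK))
  have hflcast : ((⌊z.1 * (c:ℝ)^K⌋.toNat : ℕ) : ℝ) = ((⌊z.1 * (c:ℝ)^K⌋ : ℤ) : ℝ) := by
    exact_mod_cast Int.toNat_of_nonneg hfl0
  have h1 : (a:ℝ) ≤ z.1 * (c:ℝ)^K := by
    have hle : (a:ℝ) ≤ ((⌊z.1*(c:ℝ)^K⌋.toNat : ℕ) : ℝ) :=
      Nat.cast_le.mpr (min_le_left _ _)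
    rw [hflcast] at hle
    exact le_trans hle (Int.floor_le _)
  have h2 : z.1 * (c:ℝ)^K ≤ (a:ℝ) + 1 := by
    rcases le_or_gt (⌊z.1 * (c:ℝ)^K⌋.toNat) (c^K - 1) with h | h
    · have ha' : a = ⌊z.1*(c:ℝ)^K⌋.toNat := min_eq_left h
      have hlt := Int.lt_floor_add_one (z.1 * (c:ℝ)^K)
      rw [ha', hflcast]
      linarith
    · have ha' : a = c^K - 1 := min_eq_right (by omega)
      have heq : (a:ℝ) + 1 = (c:ℝ)^K := by
        rw [ha', Nat.cast_sub hcKn]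
        push_cast
        ring
      rw [heq]
      calc z.1 * (c:ℝ)^K ≤ 1 * (c:ℝ)^K := mul_le_mul_of_nonneg_right hz1 (le_of_lt hcK)
        _ = (c:ℝ)^K := one_mul _
  obtain ⟨q, hq⟩ := key A hc K a haK J.1 (fun _ => (a:ℝ)/(c:ℝ)^K) (fun j _ => Or.inl rfl)
  unfold wdisc
  refine ciInf_le_of_le ⟨0, ?_⟩ (fun j => q j.1) ?_
  · rintro y ⟨p, rfl⟩
    exact Real.iSup_nonneg fun i => abs_nonneg _
  unfold dA
  refine Real.iSup_le (fun i => ?_) (by linarith)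
  refine le_trans (le_of_eq (congrArg abs
    (Finset.sum_coe_sort J.1 (fun j => A i j * (z.1 - if q j then (1:ℝ) else 0))))) ?_
  have hsplit : ∑ j ∈ J.1, A i j * (z.1 - (if q j then (1:ℝ) else 0))
      = (∑ j ∈ J.1, A i j) * (z.1 - (a:ℝ)/(c:ℝ)^K)
        + ∑ j ∈ J.1, A i j * ((a:ℝ)/(c:ℝ)^K - (if q j then (1:ℝ) else 0)) := by
    rw [Finset.sum_mul, ← Finset.sum_add_distrib]
    exact Finset.sum_congr rfl fun j _ => by ring
  rw [hsplit]
  have hz' : 0 ≤ z.1 - (a:ℝ)/(c:ℝ)^K := by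
    rw [sub_nonneg, div_le_iff₀ hcK]
    exact h1
  have hz'' : z.1 - (a:ℝ)/(c:ℝ)^K ≤ 1/(c:ℝ)^K := by
    rw [sub_le_iff_le_add, ← add_div, le_div_iff₀ hcK]
    linarith
  have hq' := hq i
  have hband : |(∑ j ∈ J.1, A i j) * (z.1 - (a:ℝ)/(c:ℝ)^K)| ≤ (T+1) * (1/(c:ℝ)^K) := by
    rw [abs_mul, abs_of_nonneg hz']
    exact mul_le_mul (le_trans (row_abs A i J.1) (by linarith)) hz'' hz' (by linarith)
  have hKK : (T+1) * (1/(c:ℝ)^K) < ε := by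
    have hpow : (1/(c:ℝ))^K = 1/(c:ℝ)^K := by rw [div_pow, one_pow]
    have hmul := (lt_div_iff₀ (by positivity : (0:ℝ) < T+1)).mp hK
    rw [hpow] at hmul
    linarith
  have h3 : (c:ℝ)*mherdisc A c*(1 - (1/(c:ℝ))^K) ≤ (c:ℝ)*mherdisc A c := by
    have hu0 : 0 ≤ (1/(c:ℝ))^K := by positivity
    nlinarith
  calc |(∑ j ∈ J.1, A i j) * (z.1 - (a:ℝ)/(c:ℝ)^K)
        + ∑ j ∈ J.1, A i j * ((a:ℝ)/(c:ℝ)^K - (if q j then (1:ℝ) else 0))|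
      ≤ |(∑ j ∈ J.1, A i j) * (z.1 - (a:ℝ)/(c:ℝ)^K)|
        + |∑ j ∈ J.1, A i j * ((a:ℝ)/(c:ℝ)^K - (if q j then (1:ℝ) else 0))| := abs_add_le _ _
    _ ≤ (T+1) * (1/(c:ℝ)^K) + (c:ℝ)*mherdisc A c*(1 - (1/(c:ℝ))^K) := add_le_add hband hq'
    _ ≤ (c:ℝ) * mherdisc A c + ε := by linarith
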